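/- Conversely, if E : ℝⁿ → ℝ is C¹ with global minimizer β and every gradient-flow trajectory X of E satisfies E(X_t) - E(β) ≤ e^{-2ρt}(E(X_0) - E(β)) for all t ≥ 0, then E(x) - E(β) ≤ |∇E(x)|²/(2ρ) for all x (differentiate the decay estimate at t = 0). -/

import Mathlib

open Real

lemma deriv_le_of_le_right {f g : ℝ → ℝ} {a b : ℝ}
    (hf : HasDerivAt f a 0) (hg : HasDerivAt g b 0)
    (h0 : f 0 = g 0) (h : ∀ t : ℝ, 0 ≤ t → f t ≤ g t) : a ≤ b := by
  have hf' : Filter.Tendsto (slope f 0) (nhdsWithin 0 (Set.Ioi 0)) (nhds a) :=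
    (hasDerivAt_iff_tendsto_slope.1 hf).mono_left
      (nhdsWithin_mono _ (fun t ht => ne_of_gt ht))
  have hg' : Filter.Tendsto (slope g 0) (nhdsWithin 0 (Set.Ioi 0)) (nhds b) :=
    (hasDerivAt_iff_tendsto_slope.1 hg).mono_left
      (nhdsWithin_mono _ (fun t ht => ne_of_gt ht))
  refine le_of_tendsto_of_tendsto hf' hg' ?_
  filter_upwards [self_mem_nhdsWithin] with t ht
  have ht' : (0:ℝ) < t := ht
  simp only [slope_def_field]
  gcongr <;> linarith [h t ht'.le]

/-- Converse implication: if `E : ℝⁿ → ℝ` is `C¹` with global minimizer `β`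
and through every point `x` there is a gradient-flow trajectory of `E`
satisfying the exponential decay `E(X_t) - E(β) ≤ e^{-2ρt}(E(X_0) - E(β))`,
then the entropy–production inequality `E(x) - E(β) ≤ |∇E(x)|²/(2ρ)` holds
for all `x`. -/
theorem entropy_production_inequality_of_exponential_convergence {n : ℕ}
    (E : EuclideanSpace ℝ (Fin n) → ℝ) (hE : ContDiff ℝ 1 E)
    (ρ : ℝ) (hρ : 0 < ρ)
    (β : EuclideanSpace ℝ (Fin n)) (hβ : ∀ x, E β ≤ E x)
    (hflow : ∀ x : EuclideanSpace ℝ (Fin n),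
      ∃ X : ℝ → EuclideanSpace ℝ (Fin n), X 0 = x ∧
        (∀ t : ℝ, 0 ≤ t → HasDerivAt X (-(gradient E (X t))) t) ∧
        (∀ t : ℝ, 0 ≤ t →
          E (X t) - E β ≤ Real.exp (-2 * ρ * t) * (E (X 0) - E β))) :
    ∀ x, E x - E β ≤ ‖gradient E x‖ ^ 2 / (2 * ρ) := by
  intro x
  obtain ⟨X, hX0, hXd, hXdecay⟩ := hflow x
  -- derivative of f t = E (X t) at 0
  have hdiff : DifferentiableAt ℝ E x := (hE.differentiable one_ne_zero) x
  have hgrad : HasGradientAt E (gradient E x) x := hdiff.hasGradientAt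
  have hXd0 : HasDerivAt X (-(gradient E x)) 0 := by
    have := hXd 0 le_rfl
    rwa [hX0] at this
  have hf : HasDerivAt (fun t => E (X t)) (-‖gradient E x‖ ^ 2) 0 := by
    have hgrad' : HasGradientAt E (gradient E x) (X 0) := hX0.symm ▸ hgrad
    have hcomp := hgrad'.hasFDerivAt.comp_hasDerivAt 0 hXd0
    refine hcomp.congr_deriv ?_
    rw [InnerProductSpace.toDual_apply_apply, inner_neg_right, real_inner_self_eq_norm_sq]
  -- derivative of g t = exp (-2ρt) * (E x - E β) + E β at 0
  have hg : HasDerivAt (fun t : ℝ => Real.exp (-2 * ρ * t) * (E x - E β) + E β)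
      (-2 * ρ * (E x - E β)) 0 := by
    have h1 : HasDerivAt (fun t : ℝ => -2 * ρ * t) (-2 * ρ) 0 := by
      simpa using (hasDerivAt_id (0:ℝ)).const_mul (-2 * ρ)
    have h2 := (h1.exp.mul_const (E x - E β)).add_const (E β)
    refine h2.congr_deriv ?_
    simp
  have hle : ∀ t : ℝ, 0 ≤ t →
      E (X t) ≤ Real.exp (-2 * ρ * t) * (E x - E β) + E β := by
    intro t ht
    have := hXdecay t ht
    rw [hX0] at this
    linarith
  have h0 : E (X 0) = Real.exp (-2 * ρ * 0) * (E x - E β) + E β := by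
    rw [hX0]; simp
  have key : -‖gradient E x‖ ^ 2 ≤ -2 * ρ * (E x - E β) :=
    deriv_le_of_le_right hf hg (by simpa using h0) hle
  rw [le_div_iff₀ (by linarith)]
  nlinarith
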